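/- Let {T_n} be a sequence in κ(T) which is (n₀,m)-regular for nonnegative integers n₀, m, and assume there exists C > 0 with ‖T_n x‖ ≤ C‖x‖ for every n and every x in the closure of the range of (T−I)^m. Then for any integer k > m, one has X_0 = closure(range((T−I)^k)) if and only if for every x in the closure of the range of (T−I)^m, Σ_{l=0}^{k−m} (−1)^l · binom(k−m, l) · T_{n+l·n₀} x → 0 as n → ∞. -/

import Mathlib

open Filter Topology

/-- Membership in κ(T): operators of the form Σ_{j≥0} t_j T^j with t_j ≥ 0,
Σ t_j = 1, and the series converging in operator norm. -/
def InKappa {X : Type*} [NormedAddCommGroup X] [NormedSpace ℂ X]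
    (T S : X →L[ℂ] X) : Prop :=
  ∃ t : ℕ → ℝ, (∀ j, 0 ≤ t j) ∧ HasSum t 1 ∧ HasSum (fun j => t j • T ^ j) S

/-- (n₀,m)-regularity: ‖(T T_n − T_{n+n₀})x‖ → 0 for every x ∈ range((T−I)^m). -/
def RegularSeq {X : Type*} [NormedAddCommGroup X] [NormedSpace ℂ X]
    (T : X →L[ℂ] X) (Tn : ℕ → X →L[ℂ] X) (n₀ m : ℕ) : Prop :=
  ∀ x ∈ Set.range ⇑((T - 1) ^ m),
    Tendsto (fun n => ‖T (Tn n x) - Tn (n + n₀) x‖) atTop (𝓝 0)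

section Helpers

set_option linter.unusedSectionVars false

variable {X : Type*} [NormedAddCommGroup X] [NormedSpace ℂ X] [CompleteSpace X]

theorem binom_identity {A : Type*} [Ring A] [Algebra ℂ A] (T : A) (D : ℕ) :
    (1 - T) ^ D = ∑ l ∈ Finset.range (D + 1),
      ((-1 : ℂ) ^ l * (D.choose l : ℂ)) • T ^ l := by
  rw [sub_eq_neg_add, (Commute.one_right (-T)).add_pow]
  refine Finset.sum_congr rfl fun l hl => ?_
  rw [one_pow, mul_one, neg_pow, Algebra.smul_def, map_mul, map_pow, map_neg, map_one,
    map_natCast, mul_assoc, ← (Nat.cast_commute (D.choose l) (T ^ l)).eq, mul_assoc]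

variable {X : Type*} [NormedAddCommGroup X] [NormedSpace ℂ X] [CompleteSpace X]


theorem kappa_commute {T S : X →L[ℂ] X} (h : InKappa T S) : Commute T S := by
  obtain ⟨t, h0, h1, hS⟩ := h
  have hL : HasSum (fun j => T * (t j • T ^ j)) (T * S) :=
    hS.mapL (ContinuousLinearMap.mul ℂ (X →L[ℂ] X) T)
  have hR : HasSum (fun j => (t j • T ^ j) * T) (S * T) :=
    hS.mapL ((ContinuousLinearMap.mul ℂ (X →L[ℂ] X)).flip T)
  have he : (fun j => T * (t j • T ^ j)) = fun j => (t j • T ^ j) * T := by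
    funext j
    rw [mul_smul_comm, smul_mul_assoc, ← pow_succ, ← pow_succ']
  exact hL.unique (he ▸ hR)

set_option linter.unusedSectionVars false

theorem sub_mem_closure_range {T S : X →L[ℂ] X} (h : InKappa T S) (y : X) :
    y - S y ∈ closure (Set.range ⇑(T - 1)) := by
  obtain ⟨t, h0, h1, hS⟩ := h
  have hA : HasSum (fun j => (t j • T ^ j) y) (S y) :=
    hS.mapL (ContinuousLinearMap.apply ℂ X y)
  have hy : HasSum (fun j => t j • y) y := by simpa using h1.smul_const y
  have hd : HasSum (fun j => t j • (y - (T ^ j) y)) (y - S y) := by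
    have h2 := hy.sub hA
    simpa [smul_sub] using h2
  have hmem : ∀ j, t j • (y - (T ^ j) y) ∈ LinearMap.range ((T - 1 : X →L[ℂ] X) : X →ₗ[ℂ] X) := by
    intro j
    rw [← Complex.coe_smul]
    refine Submodule.smul_mem _ _ ⟨-((∑ i ∈ Finset.range j, T ^ i) y), ?_⟩
    rw [ContinuousLinearMap.coe_coe, map_neg, ← ContinuousLinearMap.mul_apply, mul_geom_sum]
    simp [ContinuousLinearMap.sub_apply]
  show y - S y ∈ closure (↑(LinearMap.range ((T - 1 : X →L[ℂ] X) : X →ₗ[ℂ] X)) : Set X)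
  exact mem_closure_of_tendsto hd (Filter.Eventually.of_forall fun s =>
    Submodule.sum_mem _ fun j _ => hmem j)

theorem range_pow_subset (T : X →L[ℂ] X) {a b : ℕ} (hab : a ≤ b) :
    Set.range ⇑((T - 1) ^ b) ⊆ Set.range ⇑((T - 1) ^ a) := by
  rw [← Nat.add_sub_cancel' hab, pow_add, FunLike.coe_mul_eq_comp, Set.range_comp]
  exact Set.image_subset_range _ _

theorem x0_mem_closure_pow {T : X →L[ℂ] X} {Tn : ℕ → X →L[ℂ] X}
    (hκ : ∀ n, InKappa T (Tn n)) {x : X}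
    (hx : Tendsto (fun n => Tn n x) atTop (𝓝 0)) (j : ℕ) :
    x ∈ closure (Set.range ⇑((T - 1) ^ j)) := by
  induction j with
  | zero =>
    exact subset_closure ⟨x, by simp⟩
  | succ j ih =>
    have hx' : Tendsto (fun n => x - Tn n x) atTop (𝓝 x) := by
      simpa using tendsto_const_nhds.sub hx
    rw [← closure_closure (s := Set.range ⇑((T - 1) ^ (j + 1)))]
    refine mem_closure_of_tendsto hx' (Filter.Eventually.of_forall fun n => ?_)
    -- x - Tn n x = (1 - Tn n) x, and x ∈ closure (range (T-1)^j)
    have hc2 : Commute ((T - 1) ^ j) (Tn n) :=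
      ((kappa_commute (hκ n)).sub_left (Commute.one_left (Tn n))).pow_left j
    have hcomm : Commute ((T - 1) ^ j) (1 - Tn n) :=
      (Commute.one_right _).sub_right hc2
    have key : (fun y => y - Tn n y) '' Set.range ⇑((T - 1) ^ j)
        ⊆ closure (Set.range ⇑((T - 1) ^ (j + 1))) := by
      rintro _ ⟨_, ⟨w, rfl⟩, rfl⟩
      have h1 : ((T - 1) ^ j) w - Tn n (((T - 1) ^ j) w)
          = ((T - 1) ^ j) (w - Tn n w) := by
        have := congrArg (fun f : X →L[ℂ] X => f w) hc2.eq.symm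
        simpa [ContinuousLinearMap.mul_apply, ContinuousLinearMap.sub_apply, map_sub] using this
      show ((T - 1) ^ j) w - Tn n (((T - 1) ^ j) w) ∈ _
      rw [h1]
      have h2 : w - Tn n w ∈ closure (Set.range ⇑(T - 1)) :=
        sub_mem_closure_range (hκ n) w
      have h3 : ⇑((T - 1) ^ j) '' closure (Set.range ⇑(T - 1))
          ⊆ closure (⇑((T - 1) ^ j) '' Set.range ⇑(T - 1)) :=
        image_closure_subset_closure_image ((T - 1) ^ j).continuous
      have h4 : ⇑((T - 1) ^ j) '' Set.range ⇑(T - 1)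
          = Set.range ⇑((T - 1) ^ (j + 1)) := by
        rw [pow_succ, FunLike.coe_mul_eq_comp, Set.range_comp]
      exact h4 ▸ h3 (Set.mem_image_of_mem _ h2)
    have h5 : x - Tn n x ∈ (fun y => y - Tn n y) '' closure (Set.range ⇑((T - 1) ^ j)) :=
      Set.mem_image_of_mem _ ih
    have hcont : Continuous fun y : X => y - Tn n y := by continuity
    have h6 := image_closure_subset_closure_image (s := Set.range ⇑((T - 1) ^ j)) hcont h5
    have h7 := closure_mono key h6
    rwa [closure_closure] at h7


theorem approx_pow {T : X →L[ℂ] X} {Tn : ℕ → X →L[ℂ] X} {n₀ m : ℕ}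
    (hreg : RegularSeq T Tn n₀ m) {x : X} (hx : x ∈ Set.range ⇑((T - 1) ^ m)) (l : ℕ) :
    Tendsto (fun n => Tn (n + l * n₀) x - (T ^ l) (Tn n x)) atTop (𝓝 0) := by
  induction l with
  | zero => simpa using tendsto_const_nhds
  | succ l ih =>
    have hbase : Tendsto (fun n => T (Tn n x) - Tn (n + n₀) x) atTop (𝓝 0) :=
      tendsto_zero_iff_norm_tendsto_zero.mpr (hreg x hx)
    have hshift : Tendsto (fun n => T (Tn (n + l * n₀) x) - Tn (n + l * n₀ + n₀) x)
        atTop (𝓝 0) := hbase.comp (tendsto_add_atTop_nat (l * n₀))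
    have hT : Tendsto (fun n => T (Tn (n + l * n₀) x - (T ^ l) (Tn n x))) atTop (𝓝 0) := by
      have := (T.continuous.tendsto 0).comp ih
      simpa [Function.comp_def, map_sub] using this
    have hsum := hshift.neg.add hT
    rw [add_zero, neg_zero] at hsum
    refine hsum.congr fun n => ?_
    have hidx : n + (l + 1) * n₀ = n + l * n₀ + n₀ := by ring
    rw [map_sub, hidx, pow_succ', ContinuousLinearMap.mul_apply]
    abel

theorem key_approx {T : X →L[ℂ] X} {Tn : ℕ → X →L[ℂ] X} {n₀ m : ℕ}
    (hκ : ∀ n, InKappa T (Tn n)) (hreg : RegularSeq T Tn n₀ m)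
    {x : X} (hx : x ∈ Set.range ⇑((T - 1) ^ m)) (D : ℕ) :
    Tendsto (fun n => (∑ l ∈ Finset.range (D + 1),
        ((-1 : ℝ) ^ l * (D.choose l : ℝ)) • Tn (n + l * n₀) x)
      - ((-1 : ℂ) ^ D) • Tn n (((T - 1) ^ D) x)) atTop (𝓝 0) := by
  have hdiff : Tendsto (fun n => ∑ l ∈ Finset.range (D + 1),
      ((-1 : ℝ) ^ l * (D.choose l : ℝ)) • (Tn (n + l * n₀) x - (T ^ l) (Tn n x)))
      atTop (𝓝 0) := by
    have := tendsto_finset_sum (Finset.range (D + 1))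
      (fun l _ => (approx_pow hreg hx l).const_smul (((-1 : ℝ) ^ l * (D.choose l : ℝ))))
    simpa using this
  refine hdiff.congr fun n => ?_
  simp only [smul_sub]
  rw [Finset.sum_sub_distrib]
  congr 1
  -- ∑ l, c_l • (T^l)(Tn n x) = (-1)^D • Tn n ((T-1)^D x)
  have hop : ((1 - T) ^ D : X →L[ℂ] X) = ∑ l ∈ Finset.range (D + 1),
      ((-1 : ℂ) ^ l * (D.choose l : ℂ)) • T ^ l := binom_identity T D
  have hval := congrArg (fun f : X →L[ℂ] X => f (Tn n x)) hop
  simp only [ContinuousLinearMap.sum_apply, ContinuousLinearMap.smul_apply] at hval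
  have hcoef : ∀ l, ((-1 : ℝ) ^ l * (D.choose l : ℝ)) • (T ^ l) (Tn n x)
      = ((-1 : ℂ) ^ l * (D.choose l : ℂ)) • (T ^ l) (Tn n x) := by
    intro l
    rw [← Complex.coe_smul]
    push_cast
    ring_nf
  calc ∑ l ∈ Finset.range (D + 1), ((-1 : ℝ) ^ l * (D.choose l : ℝ)) • (T ^ l) (Tn n x)
      = ∑ l ∈ Finset.range (D + 1), ((-1 : ℂ) ^ l * (D.choose l : ℂ)) • (T ^ l) (Tn n x) :=
        Finset.sum_congr rfl fun l _ => hcoef l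
    _ = ((1 - T) ^ D) (Tn n x) := hval.symm
    _ = ((-1 : ℂ) ^ D) • Tn n (((T - 1) ^ D) x) := by
        have h1 : ((1 - T) ^ D : X →L[ℂ] X) = ((-1 : ℂ) ^ D) • (T - 1) ^ D := by
          rw [← neg_sub, ← neg_one_smul ℂ (T - 1 : X →L[ℂ] X), smul_pow]
        have h2 : Commute ((T - 1) ^ D) (Tn n) :=
          ((kappa_commute (hκ n)).sub_left (Commute.one_left (Tn n))).pow_left D
        have h3 := congrArg (fun f : X →L[ℂ] X => f x) h2.eq
        simp only [ContinuousLinearMap.mul_apply] at h3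
        rw [h1, ContinuousLinearMap.smul_apply, h3]


end Helpers

/-- For an (n₀,m)-regular sequence {T_n} in κ(T), bounded on closure(range((T−I)^m)),
and k > m: X₀ = closure(range((T−I)^k)) iff the alternating binomial combinations
Σ_{l=0}^{k−m} (−1)^l C(k−m,l) T_{n+l n₀} x tend to 0 for x ∈ closure(range((T−I)^m)). -/
theorem stmt3 {X : Type*} [NormedAddCommGroup X] [NormedSpace ℂ X] [CompleteSpace X]
    (T : X →L[ℂ] X) (Tn : ℕ → X →L[ℂ] X) (hκ : ∀ n, InKappa T (Tn n))
    (n₀ m : ℕ) (hreg : RegularSeq T Tn n₀ m)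
    (C : ℝ) (hC : 0 < C)
    (hbdd : ∀ n, ∀ x ∈ closure (Set.range ⇑((T - 1) ^ m)), ‖Tn n x‖ ≤ C * ‖x‖)
    (k : ℕ) (hk : m < k) :
    {x : X | Tendsto (fun n => ‖Tn n x‖) atTop (𝓝 0)}
        = closure (Set.range ⇑((T - 1) ^ k))
      ↔ ∀ x ∈ closure (Set.range ⇑((T - 1) ^ m)),
          Tendsto
            (fun n => ∑ l ∈ Finset.range (k - m + 1),
              ((-1 : ℝ) ^ l * ((k - m).choose l : ℝ)) • Tn (n + l * n₀) x)
            atTop (𝓝 0) := by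
  set D := k - m with hD
  have hDm : D + m = k := Nat.sub_add_cancel hk.le
  set Sf : ℕ → X → X := fun n x => ∑ l ∈ Finset.range (D + 1),
    ((-1 : ℝ) ^ l * (D.choose l : ℝ)) • Tn (n + l * n₀) x with hSf
  -- membership of D-th power image in range of k-th power
  have hDk : ∀ y ∈ Set.range ⇑((T - 1) ^ m),
      ((T - 1) ^ D) y ∈ Set.range ⇑((T - 1) ^ k) := by
    rintro _ ⟨w, rfl⟩
    refine ⟨w, ?_⟩
    rw [← ContinuousLinearMap.mul_apply, ← pow_add, hDm]
  -- closure of range m is closed under subtraction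
  have hsub : ∀ u v : X, u ∈ closure (Set.range ⇑((T - 1) ^ m)) →
      v ∈ closure (Set.range ⇑((T - 1) ^ m)) →
      u - v ∈ closure (Set.range ⇑((T - 1) ^ m)) := by
    intro u v hu hv
    have hcoe : closure (Set.range ⇑((T - 1) ^ m))
        = ↑((LinearMap.range (((T - 1) ^ m : X →L[ℂ] X) : X →ₗ[ℂ] X)).topologicalClosure) := by
      rw [Submodule.topologicalClosure_coe, LinearMap.coe_range, ContinuousLinearMap.coe_coe]
    rw [hcoe] at hu hv ⊢
    exact Submodule.sub_mem _ hu hv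
  -- range k ⊆ closure range m
  have hkm : Set.range ⇑((T - 1) ^ k) ⊆ closure (Set.range ⇑((T - 1) ^ m)) :=
    fun z hz => subset_closure (range_pow_subset T hk.le hz)
  -- the uniform bound for Sf
  have hSbound : ∀ n, ∀ v ∈ closure (Set.range ⇑((T - 1) ^ m)),
      ‖Sf n v‖ ≤ (2 ^ D * C) * ‖v‖ := by
    intro n v hv
    calc ‖Sf n v‖ ≤ ∑ l ∈ Finset.range (D + 1),
        ‖((-1 : ℝ) ^ l * (D.choose l : ℝ)) • Tn (n + l * n₀) v‖ := norm_sum_le _ _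
      _ ≤ ∑ l ∈ Finset.range (D + 1), (D.choose l : ℝ) * (C * ‖v‖) := by
          refine Finset.sum_le_sum fun l _ => ?_
          rw [norm_smul]
          have habs : ‖(-1 : ℝ) ^ l * (D.choose l : ℝ)‖ = (D.choose l : ℝ) := by
            simp [abs_mul]
          rw [habs]
          exact mul_le_mul_of_nonneg_left (hbdd (n + l * n₀) v hv) (Nat.cast_nonneg _)
      _ = (2 ^ D * C) * ‖v‖ := by
          rw [← Finset.sum_mul, ← Nat.cast_sum, Nat.sum_range_choose]
          push_cast; ring
  constructor
  · -- forward
    intro hX0 x hx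
    -- first: for y in the (non-closed) range
    have hgood : ∀ y ∈ Set.range ⇑((T - 1) ^ m),
        Tendsto (fun n => Sf n y) atTop (𝓝 0) := by
      intro y hy
      have hz : Tendsto (fun n => Tn n (((T - 1) ^ D) y)) atTop (𝓝 0) := by
        have hmem : ((T - 1) ^ D) y ∈ {x : X | Tendsto (fun n => ‖Tn n x‖) atTop (𝓝 0)} := by
          rw [hX0]; exact subset_closure (hDk y hy)
        exact tendsto_zero_iff_norm_tendsto_zero.mpr hmem
      have happrox := key_approx hκ hreg hy D
      have := happrox.add (hz.const_smul ((-1 : ℂ) ^ D))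
      simpa using this
    rw [NormedAddCommGroup.tendsto_nhds_zero]
    intro ε hε
    have hK : (0:ℝ) < 2 ^ D * C := by positivity
    obtain ⟨y, hy, hxy⟩ := Metric.mem_closure_iff.mp hx (ε / (2 * (2 ^ D * C)))
      (by positivity)
    rw [dist_eq_norm] at hxy
    have h1 := NormedAddCommGroup.tendsto_nhds_zero.mp (hgood y hy) (ε / 2) (by positivity)
    filter_upwards [h1] with n hn
    have hdiffeq : Sf n x - Sf n y = Sf n (x - y) := by
      simp only [hSf, ← Finset.sum_sub_distrib, ← smul_sub, ← map_sub]
    have hxymem : x - y ∈ closure (Set.range ⇑((T - 1) ^ m)) :=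
      hsub x y hx (subset_closure hy)
    have hb : ‖Sf n x - Sf n y‖ ≤ (2 ^ D * C) * ‖x - y‖ := by
      rw [hdiffeq]; exact hSbound n (x - y) hxymem
    calc ‖Sf n x‖ = ‖(Sf n x - Sf n y) + Sf n y‖ := by rw [sub_add_cancel]
      _ ≤ ‖Sf n x - Sf n y‖ + ‖Sf n y‖ := norm_add_le _ _
      _ < (2 ^ D * C) * (ε / (2 * (2 ^ D * C))) + ε / 2 := by
          exact add_lt_add_of_le_of_lt
            (hb.trans (mul_le_mul_of_nonneg_left hxy.le hK.le)) hn
      _ = ε := by field_simp; ring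
  · -- backward
    intro H
    ext x
    simp only [Set.mem_setOf_eq]
    constructor
    · intro hx0
      exact x0_mem_closure_pow hκ (tendsto_zero_iff_norm_tendsto_zero.mpr hx0) k
    · intro hxk
      -- first for z in the range of (T-1)^k
      have hgood : ∀ z ∈ Set.range ⇑((T - 1) ^ k),
          Tendsto (fun n => Tn n z) atTop (𝓝 0) := by
        rintro _ ⟨w, rfl⟩
        have hy : ((T - 1) ^ m) w ∈ Set.range ⇑((T - 1) ^ m) := ⟨w, rfl⟩
        have hS := H (((T - 1) ^ m) w) (subset_closure hy)
        have happrox := key_approx hκ hreg hy D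
        have hzeq : ((T - 1) ^ D) (((T - 1) ^ m) w) = ((T - 1) ^ k) w := by
          rw [← ContinuousLinearMap.mul_apply, ← pow_add, hDm]
        rw [hzeq] at happrox
        have h2 : Tendsto (fun n => ((-1 : ℂ) ^ D) • Tn n (((T - 1) ^ k) w))
            atTop (𝓝 0) := by
          have := hS.sub happrox
          simpa [hSf] using this
        have h3 := h2.const_smul (((-1 : ℂ) ^ D)⁻¹)
        have hne : ((-1 : ℂ) ^ D) ≠ 0 := pow_ne_zero _ (by norm_num)
        simp only [smul_smul, inv_mul_cancel₀ hne, one_smul, smul_zero] at h3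
        exact h3
      rw [← tendsto_zero_iff_norm_tendsto_zero, NormedAddCommGroup.tendsto_nhds_zero]
      intro ε hε
      obtain ⟨z, hz, hxz⟩ := Metric.mem_closure_iff.mp hxk (ε / (2 * C)) (by positivity)
      rw [dist_eq_norm] at hxz
      have h1 := NormedAddCommGroup.tendsto_nhds_zero.mp (hgood z hz) (ε / 2) (by positivity)
      filter_upwards [h1] with n hn
      have hxzmem : x - z ∈ closure (Set.range ⇑((T - 1) ^ m)) :=
        hsub x z ((closure_mono (range_pow_subset T hk.le)) hxk) (hkm hz)
      calc ‖Tn n x‖ = ‖Tn n (x - z) + Tn n z‖ := by rw [map_sub, sub_add_cancel]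
        _ ≤ ‖Tn n (x - z)‖ + ‖Tn n z‖ := norm_add_le _ _
        _ < C * (ε / (2 * C)) + ε / 2 := by
            exact add_lt_add_of_le_of_lt
              ((hbdd n (x - z) hxzmem).trans (mul_le_mul_of_nonneg_left hxz.le hC.le)) hn
        _ = ε := by field_simp; ring
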